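/- Let n ≥ 1 and let {S_t}_{t>0} and {T_t}_{t>0} be two families of bounded linear operators on L²(ℝⁿ, ℂ), each satisfying L² off-diagonal (Gaffney) estimates with exponent β > 0 and constants c, C > 0: for all closed sets E, F ⊆ ℝⁿ, all t > 0, and all f ∈ L²(ℝⁿ) supported in E, ( ∫_F |S_t f|² )^{1/2} ≤ C exp( −( dist(E,F)² / (c t) )^β ) ( ∫_E |f|² )^{1/2}, and the same for T_t. Then there exist constants c', C' > 0, depending only on the given constants, such that for all closed sets E, F ⊆ ℝⁿ, all s, t > 0, and all f ∈ L²(ℝⁿ) supported in E, ( ∫_F |S_s (T_t f)|² )^{1/2} ≤ C' exp( −( dist(E,F)² / (c' max{s,t}) )^β ) ( ∫_E |f|² )^{1/2}. -/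

import Mathlib

open MeasureTheory Set
open scoped ENNReal

noncomputable section

/-- The (possibly infinite) distance between two subsets of a pseudo-emetric space,
returned as a real number. -/
def setDist {X : Type*} [PseudoEMetricSpace X] (A B : Set X) : ℝ :=
  (⨅ a ∈ A, EMetric.infEdist a B).toReal

/-- The `L²` norm of (the restriction to `F` of) an `L²` function. -/
def l2NormOn (n : ℕ) (F : Set (EuclideanSpace ℝ (Fin n)))
    (f : Lp ℂ 2 (volume : Measure (EuclideanSpace ℝ (Fin n)))) : ℝ≥0∞ :=
  (∫⁻ x in F, (‖f x‖₊ : ℝ≥0∞) ^ 2) ^ (1 / 2 : ℝ)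

/-- A family `{S_t}_{t>0}` of bounded operators on `L²(ℝⁿ)` satisfies `L²` off-diagonal
("Gaffney") estimates with exponent `β` and constants `c, C`: for all closed sets `E, F`,
all `t > 0` and all `f ∈ L²` supported in `E`,
`‖S_t f‖_{L²(F)} ≤ C exp(−(dist(E,F)²/(ct))^β) ‖f‖_{L²(E)}`. -/
def Gaffney (n : ℕ)
    (S : ℝ → Lp ℂ 2 (volume : Measure (EuclideanSpace ℝ (Fin n))) →L[ℂ]
      Lp ℂ 2 (volume : Measure (EuclideanSpace ℝ (Fin n))))
    (β c C : ℝ) : Prop :=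
  ∀ E F : Set (EuclideanSpace ℝ (Fin n)), IsClosed E → IsClosed F →
    ∀ t : ℝ, 0 < t →
      ∀ f : Lp ℂ 2 (volume : Measure (EuclideanSpace ℝ (Fin n))),
        (∀ᵐ x, x ∉ E → f x = 0) →
        l2NormOn n F (S t f) ≤
          ENNReal.ofReal (C * Real.exp (-(setDist E F ^ 2 / (c * t)) ^ β)) *
            l2NormOn n E f

/- ### Auxiliary lemmas -/

private lemma expFac_mono {β : ℝ} (hβ : 0 < β) {u v p q : ℝ} (hu : 0 ≤ u) (huv : u ≤ v)
    (hp : 0 < p) (hpq : p ≤ q) :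
    Real.exp (-(v ^ 2 / p) ^ β) ≤ Real.exp (-(u ^ 2 / q) ^ β) := by
  apply Real.exp_le_exp.2
  apply neg_le_neg
  have hq : 0 < q := lt_of_lt_of_le hp hpq
  apply Real.rpow_le_rpow (div_nonneg (by positivity) hq.le) ?_ hβ.le
  exact div_le_div₀ (by positivity) (by nlinarith) hp hpq

private lemma expFac_le_one {β : ℝ} (hβ : 0 < β) {x p : ℝ} (hx : 0 ≤ x) (hp : 0 < p) :
    Real.exp (-(x ^ 2 / p) ^ β) ≤ 1 := by
  rw [← Real.exp_zero]
  apply Real.exp_le_exp.2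
  simp only [neg_nonpos]
  positivity

private lemma ofReal_fac_le {β C : ℝ} (hβ : 0 < β) (hC : 0 ≤ C) {x p : ℝ} (hx : 0 ≤ x)
    (hp : 0 < p) :
    ENNReal.ofReal (C * Real.exp (-(x ^ 2 / p) ^ β)) ≤ ENNReal.ofReal C := by
  apply ENNReal.ofReal_le_ofReal
  calc C * Real.exp (-(x ^ 2 / p) ^ β) ≤ C * 1 := by
        exact mul_le_mul_of_nonneg_left (expFac_le_one hβ hx hp) hC
    _ = C := mul_one C

private lemma l2NormOn_eq (n : ℕ) (F : Set (EuclideanSpace ℝ (Fin n)))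
    (f : Lp ℂ 2 (volume : Measure (EuclideanSpace ℝ (Fin n)))) :
    l2NormOn n F f = eLpNorm (⇑f) 2 (volume.restrict F) := by
  rw [eLpNorm_eq_lintegral_rpow_enorm_toReal two_ne_zero ENNReal.ofNat_ne_top]
  simp only [ENNReal.toReal_ofNat, l2NormOn]
  congr 1
  refine lintegral_congr fun x => ?_
  rw [← ENNReal.rpow_natCast]
  norm_num
  rfl

private lemma l2NormOn_add_le (n : ℕ) (F : Set (EuclideanSpace ℝ (Fin n)))
    (f g : Lp ℂ 2 (volume : Measure (EuclideanSpace ℝ (Fin n)))) :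
    l2NormOn n F (f + g) ≤ l2NormOn n F f + l2NormOn n F g := by
  rw [l2NormOn_eq, l2NormOn_eq, l2NormOn_eq]
  calc eLpNorm (⇑(f + g)) 2 (volume.restrict F)
      = eLpNorm (⇑f + ⇑g) 2 (volume.restrict F) :=
        eLpNorm_congr_ae (ae_restrict_of_ae (Lp.coeFn_add f g))
    _ ≤ _ := eLpNorm_add_le ((Lp.aestronglyMeasurable f).restrict)
        ((Lp.aestronglyMeasurable g).restrict) one_le_two

private lemma l2NormOn_mono_set (n : ℕ) {A B : Set (EuclideanSpace ℝ (Fin n))} (h : A ⊆ B)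
    (f : Lp ℂ 2 (volume : Measure (EuclideanSpace ℝ (Fin n)))) :
    l2NormOn n A f ≤ l2NormOn n B f :=
  ENNReal.rpow_le_rpow (lintegral_mono_set h) (by norm_num)

private lemma l2NormOn_indicator_le (n : ℕ) {A B : Set (EuclideanSpace ℝ (Fin n))}
    (hB : MeasurableSet B) (hAB : A ⊆ B)
    (g u : Lp ℂ 2 (volume : Measure (EuclideanSpace ℝ (Fin n))))
    (hu : ⇑u =ᵐ[volume] A.indicator ⇑g) :
    l2NormOn n Set.univ u ≤ l2NormOn n B g := by
  apply ENNReal.rpow_le_rpow ?_ (by norm_num : (0:ℝ) ≤ 1/2)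
  rw [Measure.restrict_univ]
  calc ∫⁻ x, (‖u x‖₊ : ℝ≥0∞) ^ 2
      = ∫⁻ x, A.indicator (fun y => (‖g y‖₊ : ℝ≥0∞) ^ 2) x := by
        refine lintegral_congr_ae ?_
        filter_upwards [hu] with x hx
        by_cases hxA : x ∈ A <;> simp [Set.indicator, hxA, hx]
    _ ≤ ∫⁻ x, B.indicator (fun y => (‖g y‖₊ : ℝ≥0∞) ^ 2) x :=
        lintegral_mono fun x =>
          Set.indicator_le_indicator_of_subset hAB (fun _ => zero_le) x
    _ = ∫⁻ x in B, (‖g x‖₊ : ℝ≥0∞) ^ 2 := lintegral_indicator hB _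

set_option maxHeartbeats 1000000 in
/-- If two families `{S_t}` and `{T_t}` of bounded operators on `L²(ℝⁿ)` both satisfy
Gaffney estimates with exponent `β` and constants `c, C`, then there are `c', C' > 0`
(depending only on the given constants) such that for all closed `E, F`, all `s, t > 0`
and all `f ∈ L²` supported in `E`,
`‖S_s T_t f‖_{L²(F)} ≤ C' exp(−(dist(E,F)²/(c' max{s,t}))^β) ‖f‖_{L²(E)}`. -/
theorem stmt4 (n : ℕ) (hn : 1 ≤ n) (β c C : ℝ) (hβ : 0 < β) (hc : 0 < c) (hC : 0 < C)
    (S T : ℝ → Lp ℂ 2 (volume : Measure (EuclideanSpace ℝ (Fin n))) →L[ℂ]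
      Lp ℂ 2 (volume : Measure (EuclideanSpace ℝ (Fin n))))
    (hS : Gaffney n S β c C) (hT : Gaffney n T β c C) :
    ∃ c' C' : ℝ, 0 < c' ∧ 0 < C' ∧
      ∀ E F : Set (EuclideanSpace ℝ (Fin n)), IsClosed E → IsClosed F →
        ∀ s t : ℝ, 0 < s → 0 < t →
          ∀ f : Lp ℂ 2 (volume : Measure (EuclideanSpace ℝ (Fin n))),
            (∀ᵐ x, x ∉ E → f x = 0) →
            l2NormOn n F (S s (T t f)) ≤
              ENNReal.ofReal
                  (C' * Real.exp (-(setDist E F ^ 2 / (c' * max s t)) ^ β)) *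
                l2NormOn n E f := by
  classical
  refine ⟨4 * c, 2 * C ^ 2, by positivity, by positivity, ?_⟩
  intro E F hE hF s t hs ht f hf
  have hm0 : 0 < max s t := lt_of_lt_of_le hs (le_max_left s t)
  have hd0 : 0 ≤ setDist E F := ENNReal.toReal_nonneg
  -- the function T t f is globally controlled by `f` on `E`
  have hN : l2NormOn n Set.univ (T t f) ≤ ENNReal.ofReal C * l2NormOn n E f := by
    calc l2NormOn n Set.univ (T t f)
        ≤ ENNReal.ofReal (C * Real.exp (-(setDist E Set.univ ^ 2 / (c * t)) ^ β)) *
            l2NormOn n E f := hT E Set.univ hE isClosed_univ t ht f hf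
      _ ≤ _ := mul_le_mul_left
          (ofReal_fac_le hβ hC.le ENNReal.toReal_nonneg (by positivity)) _
  rcases lt_or_ge 0 (setDist E F) with hdpos | hdneg
  · -- main case : positive distance
    set d := setDist E F with hd
    have hEne : E.Nonempty := by
      rcases Set.eq_empty_or_nonempty E with h | h
      · rw [hd] at hdpos; simp [setDist, h] at hdpos
      · exact h
    have hFne : F.Nonempty := by
      rcases Set.eq_empty_or_nonempty F with h | h
      · rw [hd] at hdpos; simp [setDist, h, EMetric.infEdist] at hdpos
      · exact h
    set D := ⨅ a ∈ E, EMetric.infEdist a F with hD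
    have hDtop : D ≠ ⊤ := by
      obtain ⟨a, ha⟩ := hEne
      exact ne_top_of_le_ne_top (Metric.infEdist_ne_top hFne) (iInf₂_le a ha)
    have hdD : ENNReal.ofReal d = D := by
      have : d = D.toReal := rfl
      rw [this, ENNReal.ofReal_toReal hDtop]
    set r := ENNReal.ofReal (d / 2) with hr
    have hrtop : r ≠ ⊤ := ENNReal.ofReal_ne_top
    have hrr : r + r = ENNReal.ofReal d := by
      rw [hr, ← ENNReal.ofReal_add (by positivity) (by positivity)]
      norm_num
    set G := {x : EuclideanSpace ℝ (Fin n) | EMetric.infEdist x E ≤ r} with hG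
    set H := {x : EuclideanSpace ℝ (Fin n) | r ≤ EMetric.infEdist x E} with hH
    have hGclosed : IsClosed G := isClosed_le EMetric.continuous_infEdist continuous_const
    have hHclosed : IsClosed H := isClosed_le continuous_const EMetric.continuous_infEdist
    have hEG : E ⊆ G := fun a ha => by
      simp [hG, EMetric.infEdist, Metric.infEDist_zero_of_mem ha]
    have hGcH : Gᶜ ⊆ H := by
      intro x hx
      simp only [hG, Set.mem_compl_iff, Set.mem_setOf_eq, not_le] at hx
      exact le_of_lt hx
    have hFH : F ⊆ H := by
      intro b hb
      have h1 : D ≤ EMetric.infEdist b E := by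
        unfold EMetric.infEdist; rw [Metric.le_infEDist]
        intro a ha
        refine (iInf₂_le a ha).trans ?_
        rw [edist_comm]
        exact EMetric.infEdist_le_edist_of_mem hb
      refine le_trans (le_trans ?_ hdD.le) h1
      exact ENNReal.ofReal_le_ofReal (by linarith)
    -- distance from G to F is at least d/2
    have hGF : d / 2 ≤ setDist G F := by
      have hinf : r ≤ ⨅ x ∈ G, EMetric.infEdist x F := by
        refine le_iInf₂ fun x hx => ?_
        have h1 : D ≤ EMetric.infEdist x F + EMetric.infEdist x E := by
          have h2 : EMetric.infEdist x F + EMetric.infEdist x E =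
              ⨅ a ∈ E, (EMetric.infEdist x F + edist x a) := by
            simp only [EMetric.infEdist, Metric.infEDist, ENNReal.add_iInf]
          rw [h2]
          refine le_iInf₂ fun a ha => ?_
          refine (iInf₂_le a ha).trans ?_
          rw [edist_comm x a]
          exact EMetric.infEdist_le_infEdist_add_edist
        have h3 : r + r ≤ EMetric.infEdist x F + r := by
          rw [hrr, hdD]
          exact h1.trans (add_le_add_right hx _)
        exact (ENNReal.add_le_add_iff_right hrtop).1 h3
      have hne : (⨅ x ∈ G, EMetric.infEdist x F) ≠ ⊤ := by
        obtain ⟨a, ha⟩ := hEne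
        exact ne_top_of_le_ne_top (Metric.infEdist_ne_top hFne) (iInf₂_le a (hEG ha))
      have := (ENNReal.ofReal_le_iff_le_toReal hne).1 hinf
      exact this
    -- distance from E to H is at least d/2
    have hEH : d / 2 ≤ setDist E H := by
      have hinf : r ≤ ⨅ a ∈ E, EMetric.infEdist a H := by
        refine le_iInf₂ fun a ha => ?_
        unfold EMetric.infEdist; rw [Metric.le_infEDist]
        intro y hy
        refine le_trans hy ?_
        rw [edist_comm]
        exact EMetric.infEdist_le_edist_of_mem ha
      have hne : (⨅ a ∈ E, EMetric.infEdist a H) ≠ ⊤ := by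
        obtain ⟨a, ha⟩ := hEne
        obtain ⟨b, hb⟩ := hFne
        exact ne_top_of_le_ne_top (Metric.infEdist_ne_top ⟨b, hFH hb⟩) (iInf₂_le a ha)
      exact (ENNReal.ofReal_le_iff_le_toReal hne).1 hinf
    -- decompose g := T t f
    set g := T t f with hg
    have hmem : MemLp (⇑g) 2 (volume : Measure (EuclideanSpace ℝ (Fin n))) := Lp.memLp g
    set g₁ := (hmem.indicator hGclosed.measurableSet).toLp (G.indicator ⇑g) with hg₁
    set g₂ := (hmem.indicator hGclosed.measurableSet.compl).toLp (Gᶜ.indicator ⇑g) with hg₂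
    have hg₁coe : ⇑g₁ =ᵐ[volume] G.indicator ⇑g := MemLp.coeFn_toLp _
    have hg₂coe : ⇑g₂ =ᵐ[volume] Gᶜ.indicator ⇑g := MemLp.coeFn_toLp _
    have hsplit : g = g₁ + g₂ := by
      apply Lp.ext
      filter_upwards [Lp.coeFn_add g₁ g₂, hg₁coe, hg₂coe] with x h1 h2 h3
      rw [h1, Pi.add_apply, h2, h3]
      exact (Set.indicator_self_add_compl_apply G (⇑g) x).symm
    -- the two pieces
    have hA1 : l2NormOn n F (S s g₁) ≤
        ENNReal.ofReal (C * Real.exp (-(setDist G F ^ 2 / (c * s)) ^ β)) *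
          (ENNReal.ofReal C * l2NormOn n E f) := by
      have hsupp : ∀ᵐ x, x ∉ G → g₁ x = 0 := by
        filter_upwards [hg₁coe] with x hx hxG
        rw [hx, Set.indicator_of_notMem hxG]
      refine (hS G F hGclosed hF s hs g₁ hsupp).trans (mul_le_mul_right ?_ _)
      calc l2NormOn n G g₁ ≤ l2NormOn n Set.univ g₁ :=
            l2NormOn_mono_set n (Set.subset_univ G) g₁
        _ ≤ l2NormOn n Set.univ g :=
            l2NormOn_indicator_le n MeasurableSet.univ (Set.subset_univ G) g g₁ hg₁coe
        _ ≤ _ := hN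
    have hA2 : l2NormOn n F (S s g₂) ≤
        ENNReal.ofReal C *
          (ENNReal.ofReal (C * Real.exp (-(setDist E H ^ 2 / (c * t)) ^ β)) *
            l2NormOn n E f) := by
      have hsupp : ∀ᵐ x, x ∉ (Set.univ : Set (EuclideanSpace ℝ (Fin n))) → g₂ x = 0 :=
        Filter.Eventually.of_forall fun x hx => absurd (Set.mem_univ x) hx
      calc l2NormOn n F (S s g₂)
          ≤ ENNReal.ofReal
              (C * Real.exp (-(setDist Set.univ F ^ 2 / (c * s)) ^ β)) *
              l2NormOn n Set.univ g₂ :=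
            hS Set.univ F isClosed_univ hF s hs g₂ hsupp
        _ ≤ ENNReal.ofReal C * l2NormOn n Set.univ g₂ :=
            mul_le_mul_left
              (ofReal_fac_le hβ hC.le ENNReal.toReal_nonneg (by positivity)) _
        _ ≤ ENNReal.ofReal C * l2NormOn n H g :=
            mul_le_mul_right
              (l2NormOn_indicator_le n hHclosed.measurableSet hGcH g g₂ hg₂coe) _
        _ ≤ _ := mul_le_mul_right (hT E H hE hHclosed t ht f hf) _
    -- combine
    set e := Real.exp (-(d ^ 2 / (4 * c * max s t)) ^ β) with he
    have hee : e = Real.exp (-((d / 2) ^ 2 / (c * max s t)) ^ β) := by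
      rw [he]
      congr 3
      field_simp
      ring
    have he1 : Real.exp (-(setDist G F ^ 2 / (c * s)) ^ β) ≤ e := by
      rw [hee]
      exact expFac_mono hβ (by positivity) hGF (by positivity)
        (by nlinarith [le_max_left s t])
    have he2 : Real.exp (-(setDist E H ^ 2 / (c * t)) ^ β) ≤ e := by
      rw [hee]
      exact expFac_mono hβ (by positivity) hEH (by positivity)
        (by nlinarith [le_max_right s t])
    have he0 : 0 < e := Real.exp_pos _
    calc l2NormOn n F (S s (T t f))
        = l2NormOn n F (S s g₁ + S s g₂) := by rw [← hg, hsplit, map_add]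
      _ ≤ l2NormOn n F (S s g₁) + l2NormOn n F (S s g₂) := l2NormOn_add_le n F _ _
      _ ≤ ENNReal.ofReal (C * Real.exp (-(setDist G F ^ 2 / (c * s)) ^ β)) *
            (ENNReal.ofReal C * l2NormOn n E f) +
          ENNReal.ofReal C *
            (ENNReal.ofReal (C * Real.exp (-(setDist E H ^ 2 / (c * t)) ^ β)) *
              l2NormOn n E f) := add_le_add hA1 hA2
      _ ≤ ENNReal.ofReal (C * e) * (ENNReal.ofReal C * l2NormOn n E f) +
          ENNReal.ofReal C * (ENNReal.ofReal (C * e) * l2NormOn n E f) := by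
            gcongr
      _ = ENNReal.ofReal (2 * C ^ 2 * e) * l2NormOn n E f := by
            rw [← mul_assoc, ← mul_assoc, ← ENNReal.ofReal_mul (by positivity),
              ← ENNReal.ofReal_mul hC.le, ← add_mul, ← ENNReal.ofReal_add (by positivity)
                (by positivity)]
            congr 2
            ring
      _ = _ := by rw [he]
  · -- degenerate case : distance zero
    have hdz : setDist E F = 0 := le_antisymm hdneg hd0
    have h1 : l2NormOn n F (S s (T t f)) ≤
        ENNReal.ofReal C * l2NormOn n Set.univ (T t f) := by
      calc l2NormOn n F (S s (T t f))
          ≤ ENNReal.ofReal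
              (C * Real.exp (-(setDist Set.univ F ^ 2 / (c * s)) ^ β)) *
              l2NormOn n Set.univ (T t f) :=
            hS Set.univ F isClosed_univ hF s hs (T t f)
              (Filter.Eventually.of_forall fun x hx => absurd (Set.mem_univ x) hx)
        _ ≤ _ := mul_le_mul_left
            (ofReal_fac_le hβ hC.le ENNReal.toReal_nonneg (by positivity)) _
    calc l2NormOn n F (S s (T t f))
        ≤ ENNReal.ofReal C * (ENNReal.ofReal C * l2NormOn n E f) :=
          h1.trans (mul_le_mul_right hN _)
      _ = ENNReal.ofReal (C * C) * l2NormOn n E f := by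
          rw [← mul_assoc, ← ENNReal.ofReal_mul hC.le]
      _ ≤ _ := by
          apply mul_le_mul_left
          apply ENNReal.ofReal_le_ofReal
          rw [hdz]
          have : ((0:ℝ) ^ 2 / (4 * c * max s t)) ^ β = 0 := by
            rw [zero_pow two_ne_zero, zero_div, Real.zero_rpow hβ.ne']
          rw [this, neg_zero, Real.exp_zero, mul_one]
          nlinarith
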